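/- Define polynomials p̃_k(z) by p̃₀(z) = z and p̃_{k+1}(z) = σ⁰_{k+1}(p̃₀(z),…,p̃_k(z)), where σ⁰_k(a₁,…,a_k) = Σ_{j=1}^k ((−1)^{j+1}/j) s_{j,k}(a₁,…,a_k) and s_{j,k}(a₁,…,a_k) = Σ_{i₁+⋯+i_j=k} a_{i₁}⋯a_{i_j}. Then for every n ≥ 0, −W₋₁(−e^{−x}) = x + Σ_{k=0}^n p̃_k(ln x)/x^k + O((ln x / x)^{n+1}) as x → +∞, where y = −W₋₁(−e^{−x}) is the unique solution of y − ln y = x with y > 1 (for x > 1). -/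

import Mathlib

open Set Filter Finset

/-- `sP a j k` is the polynomial `s_{j,k}(a₁,…,a_k) = Σ_{i₁+⋯+i_j=k} a_{i₁}⋯a_{i_j}`
(sum over positive indices), defined via the recursion
`s_{0,k} = δ_{0,k}`, `s_{m+1,k} = Σ_{j<k} s_{m,j} a_{k−j}`. -/
def sP (a : ℕ → ℝ) : ℕ → ℕ → ℝ
  | 0, k => if k = 0 then 1 else 0
  | m + 1, k => ∑ j ∈ Finset.range k, sP a m j * a (k - j)

/-- `σ⁰_k(a₁,…,a_k) = Σ_{j=1}^k ((−1)^{j+1}/j) s_{j,k}(a₁,…,a_k)`. -/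
noncomputable def sigma0 (a : ℕ → ℝ) (k : ℕ) : ℝ :=
  ∑ j ∈ Finset.Icc 1 k, ((-1 : ℝ) ^ (j + 1) / j) * sP a j k

/-- The polynomials (as functions of `z`) `p̃₀(z) = z`,
`p̃_{k+1}(z) = σ⁰_{k+1}(p̃₀(z),…,p̃_k(z))`. -/
noncomputable def ptilde : ℕ → ℝ → ℝ
  | 0 => fun z => z
  | k + 1 => fun z =>
      sigma0 (fun i => if h : i - 1 < k + 1 then ptilde (i - 1) z else 0) (k + 1)
  decreasing_by exact h

lemma sP_congr (a b : ℕ → ℝ) (K : ℕ) (hab : ∀ i, 1 ≤ i → i ≤ K → a i = b i) :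
    ∀ m, ∀ k ≤ K, sP a m k = sP b m k := by
  intro m
  induction m with
  | zero => intro k _; rfl
  | succ m ih =>
    intro k hk
    simp only [sP]
    refine Finset.sum_congr rfl fun j hj => ?_
    rw [Finset.mem_range] at hj
    rw [ih j (le_trans hj.le hk), hab (k - j) (by omega) (by omega)]

lemma sigma0_congr (a b : ℕ → ℝ) (K : ℕ) (hab : ∀ i, 1 ≤ i → i ≤ K → a i = b i)
    (k : ℕ) (hk : k ≤ K) : sigma0 a k = sigma0 b k := by
  unfold sigma0
  refine Finset.sum_congr rfl fun j hj => ?_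
  rw [sP_congr a b K hab j k hk]

lemma sP_zero_of_lt (a : ℕ → ℝ) : ∀ m k, k < m → sP a m k = 0 := by
  intro m
  induction m with
  | zero => omega
  | succ m ih =>
    intro k hk
    simp only [sP]
    refine Finset.sum_eq_zero fun j hj => ?_
    rw [Finset.mem_range] at hj
    rw [ih j (by omega), zero_mul]

lemma sP_zero_of_support (a : ℕ → ℝ) (N : ℕ) (ha : ∀ i, N < i → a i = 0) :
    ∀ m k, m * N < k → sP a m k = 0 := by
  intro m
  induction m with
  | zero => intro k hk; simp only [sP]; rw [if_neg]; omega
  | succ m ih =>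
    intro k hk
    simp only [sP]
    refine Finset.sum_eq_zero fun j hj => ?_
    rw [Finset.mem_range] at hj
    rcases lt_or_ge (m * N) j with h | h
    · rw [ih j h, zero_mul]
    · have : N < k - j := by
        have : (m + 1) * N = m * N + N := by ring
        omega
      rw [ha (k - j) this, mul_zero]

lemma sP_nonneg (D : ℕ → ℝ) (hD : ∀ i, 0 ≤ D i) : ∀ m k, 0 ≤ sP D m k := by
  intro m
  induction m with
  | zero => intro k; simp only [sP]; split <;> norm_num
  | succ m ih =>
    intro k
    simp only [sP]
    exact Finset.sum_nonneg fun j _ => mul_nonneg (ih j) (hD _)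

lemma sP_bound (a D : ℕ → ℝ) (z : ℝ) (hz : 1 ≤ z) (hD : ∀ i, 0 ≤ D i)
    (ha : ∀ i, 1 ≤ i → |a i| ≤ D i * z ^ i) :
    ∀ m k, |sP a m k| ≤ sP D m k * z ^ k := by
  have hz0 : (0:ℝ) ≤ z := by linarith
  intro m
  induction m with
  | zero =>
    intro k
    simp only [sP]
    split
    · subst ‹k = 0›; simp
    · simp [pow_nonneg hz0]
  | succ m ih =>
    intro k
    simp only [sP]
    refine le_trans (Finset.abs_sum_le_sum_abs _ _) ?_
    rw [Finset.sum_mul]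
    refine Finset.sum_le_sum fun j hj => ?_
    rw [Finset.mem_range] at hj
    rw [abs_mul]
    have h2 : |a (k - j)| ≤ D (k - j) * z ^ (k - j) := ha (k - j) (by omega)
    calc |sP a m j| * |a (k - j)|
        ≤ (sP D m j * z ^ j) * (D (k - j) * z ^ (k - j)) := by
          apply mul_le_mul (ih j) h2 (abs_nonneg _)
          exact mul_nonneg (sP_nonneg D hD m j) (pow_nonneg hz0 j)
      _ = sP D m j * D (k - j) * z ^ (j + (k - j)) := by rw [pow_add]; ring
      _ = sP D m j * D (k - j) * z ^ k := by congr 2; omega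

lemma ptilde_succ (k : ℕ) (z : ℝ) :
    ptilde (k + 1) z = sigma0 (fun i => ptilde (i - 1) z) (k + 1) := by
  conv_lhs => rw [ptilde]
  refine sigma0_congr _ _ (k + 1) (fun i h1 h2 => ?_) (k + 1) le_rfl
  rw [dif_pos (by omega)]

lemma sum_Icc_one_eq_sum_range (g : ℕ → ℝ) (n : ℕ) :
    ∑ j ∈ Finset.Icc 1 n, g j = ∑ i ∈ Finset.range n, g (i + 1) := by
  induction n with
  | zero => simp
  | succ n ih =>
    rw [Finset.sum_Icc_succ_top (by omega), ih, Finset.sum_range_succ]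

lemma ptilde_bound : ∀ k : ℕ, ∃ C : ℝ, 0 ≤ C ∧ ∀ z : ℝ, 1 ≤ z →
    |ptilde k z| ≤ C * z ^ max k 1 := by
  intro k
  induction k using Nat.strong_induction_on with
  | _ k IH =>
    match k with
    | 0 => exact ⟨1, zero_le_one, fun z hz => by rw [ptilde, abs_of_nonneg (by linarith : (0:ℝ) ≤ z)]; simp⟩
    | k + 1 =>
      set D : ℕ → ℝ := fun i =>
        if h : 1 ≤ i ∧ i ≤ k + 1 then (IH (i - 1) (by omega)).choose else 0 with hDdef
      have hD : ∀ i, 0 ≤ D i := by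
        intro i
        simp only [hDdef]
        split
        · rename_i h; exact (IH (i - 1) (by omega)).choose_spec.1
        · exact le_refl 0
      refine ⟨∑ j ∈ Finset.Icc 1 (k + 1), sP D j (k + 1), ?_, ?_⟩
      · exact Finset.sum_nonneg fun j _ => sP_nonneg D hD j _
      intro z hz
      have hz0 : (0:ℝ) ≤ z := by linarith
      set a : ℕ → ℝ := fun i => if 1 ≤ i ∧ i ≤ k + 1 then ptilde (i - 1) z else 0 with hadef
      have ha : ∀ i, 1 ≤ i → |a i| ≤ D i * z ^ i := by
        intro i hi
        simp only [hadef, hDdef]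
        by_cases h : 1 ≤ i ∧ i ≤ k + 1
        · rw [if_pos h, dif_pos h]
          refine le_trans ((IH (i - 1) (by omega)).choose_spec.2 z hz) ?_
          have := (IH (i - 1) (by omega)).choose_spec.1
          apply mul_le_mul_of_nonneg_left _ this
          exact pow_le_pow_right₀ hz (by omega)
        · rw [if_neg h, dif_neg h, abs_zero]
          positivity
      have heq : ptilde (k + 1) z = sigma0 a (k + 1) := by
        rw [ptilde_succ]
        refine sigma0_congr _ _ (k + 1) (fun i h1 h2 => ?_) (k + 1) le_rfl
        simp only [hadef]; rw [if_pos ⟨h1, h2⟩]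
      rw [heq, max_eq_left (by omega : 1 ≤ k + 1)]
      unfold sigma0
      refine le_trans (Finset.abs_sum_le_sum_abs _ _) ?_
      rw [Finset.sum_mul]
      refine Finset.sum_le_sum fun j hj => ?_
      rw [Finset.mem_Icc] at hj
      rw [abs_mul]
      have h1 : |(-1 : ℝ) ^ (j + 1) / j| ≤ 1 := by
        rw [abs_div, abs_pow, abs_neg, abs_one, one_pow, abs_of_nonneg (by positivity : (0:ℝ) ≤ (j:ℝ))]
        rw [div_le_one (by exact_mod_cast hj.1)]
        exact_mod_cast hj.1
      calc |(-1 : ℝ) ^ (j + 1) / j| * |sP a j (k + 1)|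
          ≤ 1 * (sP D j (k + 1) * z ^ (k + 1)) := by
            apply mul_le_mul h1 (sP_bound a D z hz hD ha j (k + 1)) (abs_nonneg _) zero_le_one
        _ = sP D j (k + 1) * z ^ (k + 1) := one_mul _

lemma pow_expand (a : ℕ → ℝ) (N : ℕ) (ha0 : a 0 = 0) (haN : ∀ i, N < i → a i = 0)
    (X : ℝ) : ∀ m M : ℕ, m * N < M →
    (∑ i ∈ Finset.range (N + 1), a i * X ^ i) ^ m
      = ∑ k ∈ Finset.range M, sP a m k * X ^ k := by
  intro m
  induction m with
  | zero =>
    intro M hM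
    rw [pow_zero]
    symm
    rw [Finset.sum_eq_single 0 (fun k _ hk0 => by simp [sP, hk0])
      (fun h => absurd (Finset.mem_range.2 (by omega)) h)]
    simp [sP]
  | succ m ih =>
    intro M hM
    have hMN : (m + 1) * N = m * N + N := by ring
    have hm : m * N < M := by omega
    rw [pow_succ, ih M hm]
    have hsub : ∑ i ∈ Finset.range (N + 1), a i * X ^ i
        = ∑ i ∈ Finset.range M, a i * X ^ i := by
      apply Finset.sum_subset (Finset.range_subset_range.2 (by omega))
      intro i _ hi
      rw [Finset.mem_range, not_lt] at hi
      rw [haN i (by omega), zero_mul]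
    rw [hsub, Finset.sum_mul_sum]
    have hstep : ∀ k, sP a (m + 1) k * X ^ k
        = ∑ j ∈ Finset.range (k + 1), sP a m j * a (k - j) * X ^ (j + (k - j)) := by
      intro k
      have h1 : sP a (m + 1) k = ∑ j ∈ Finset.range (k + 1), sP a m j * a (k - j) := by
        rw [Finset.sum_range_succ]
        simp only [sP, Nat.sub_self, ha0, mul_zero, add_zero]
      rw [h1, Finset.sum_mul]
      refine Finset.sum_congr rfl fun j hj => ?_
      rw [Finset.mem_range] at hj
      congr 2
      omega
    symm
    calc ∑ k ∈ Finset.range M, sP a (m + 1) k * X ^ k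
        = ∑ k ∈ Finset.range M, ∑ j ∈ Finset.range (k + 1),
            sP a m j * a (k - j) * X ^ (j + (k - j)) :=
          Finset.sum_congr rfl fun k _ => hstep k
      _ = ∑ j ∈ Finset.range M, ∑ i ∈ Finset.range (M - j),
            sP a m j * a i * X ^ (j + i) :=
          Finset.sum_range_diag_flip M fun j i => sP a m j * a i * X ^ (j + i)
      _ = ∑ j ∈ Finset.range M, ∑ i ∈ Finset.range M,
            sP a m j * a i * X ^ (j + i) := by
          refine Finset.sum_congr rfl fun j hj => ?_
          rw [Finset.mem_range] at hj
          apply Finset.sum_subset (Finset.range_subset_range.2 (by omega))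
          intro i hi2 hi
          rw [Finset.mem_range, not_lt] at hi
          rcases lt_or_ge N i with h | h
          · rw [haN i h, mul_zero, zero_mul]
          · rw [sP_zero_of_support a N haN m j (by omega), zero_mul, zero_mul]
      _ = ∑ k ∈ Finset.range M, ∑ i ∈ Finset.range M,
            sP a m k * X ^ k * (a i * X ^ i) := by
          refine Finset.sum_congr rfl fun j _ => Finset.sum_congr rfl fun i _ => ?_
          rw [pow_add]; ring

lemma series_expand (a : ℕ → ℝ) (N L : ℕ) (ha0 : a 0 = 0) (haN : ∀ i, N < i → a i = 0)
    (X : ℝ) (M : ℕ) (hM : L * N < M) :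
    ∑ j ∈ Finset.Icc 1 L, ((-1:ℝ) ^ (j+1) / j)
        * (∑ i ∈ Finset.range (N + 1), a i * X ^ i) ^ j
      = ∑ k ∈ Finset.range M,
          (∑ j ∈ Finset.Icc 1 L, ((-1:ℝ) ^ (j+1) / j) * sP a j k) * X ^ k := by
  calc ∑ j ∈ Finset.Icc 1 L, ((-1:ℝ)^(j+1)/j)
          * (∑ i ∈ Finset.range (N + 1), a i * X ^ i) ^ j
      = ∑ j ∈ Finset.Icc 1 L, ∑ k ∈ Finset.range M,
          ((-1:ℝ)^(j+1)/j) * (sP a j k * X ^ k) := by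
        refine Finset.sum_congr rfl fun j hj => ?_
        rw [Finset.mem_Icc] at hj
        rw [pow_expand a N ha0 haN X j M
          (lt_of_le_of_lt (Nat.mul_le_mul_right N hj.2) hM), Finset.mul_sum]
    _ = ∑ k ∈ Finset.range M, ∑ j ∈ Finset.Icc 1 L,
          ((-1:ℝ)^(j+1)/j) * (sP a j k * X ^ k) := Finset.sum_comm
    _ = ∑ k ∈ Finset.range M,
          (∑ j ∈ Finset.Icc 1 L, ((-1:ℝ)^(j+1)/j) * sP a j k) * X ^ k := by
        refine Finset.sum_congr rfl fun k _ => ?_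
        rw [Finset.sum_mul]
        exact Finset.sum_congr rfl fun j _ => (mul_assoc _ _ _).symm

noncomputable def acoef (n : ℕ) (z : ℝ) : ℕ → ℝ :=
  fun i => if 1 ≤ i ∧ i ≤ n + 1 then ptilde (i - 1) z else 0

lemma ck_eq (n : ℕ) (z : ℝ) (k : ℕ) (hk1 : 1 ≤ k) (hk2 : k ≤ n + 1) :
    ∑ j ∈ Finset.Icc 1 (n + 1), ((-1:ℝ) ^ (j+1) / j) * sP (acoef n z) j k
      = ptilde k z := by
  have hsub : ∑ j ∈ Finset.Icc 1 k, ((-1:ℝ) ^ (j+1) / j) * sP (acoef n z) j k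
      = ∑ j ∈ Finset.Icc 1 (n + 1), ((-1:ℝ) ^ (j+1) / j) * sP (acoef n z) j k := by
    apply Finset.sum_subset (Finset.Icc_subset_Icc_right hk2)
    intro j hj hj'
    rw [Finset.mem_Icc] at hj
    rw [Finset.mem_Icc, not_and, not_le] at hj'
    rw [sP_zero_of_lt _ j k (hj' hj.1), mul_zero]
  rw [← hsub]
  have h1 : ∑ j ∈ Finset.Icc 1 k, ((-1:ℝ) ^ (j+1) / j) * sP (acoef n z) j k
      = sigma0 (acoef n z) k := rfl
  rw [h1]
  obtain ⟨k', rfl⟩ : ∃ k', k = k' + 1 := ⟨k - 1, by omega⟩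
  rw [sigma0_congr (acoef n z) (fun i => ptilde (i - 1) z) (k' + 1)
    (fun i h1 h2 => by simp only [acoef]; rw [if_pos ⟨h1, by omega⟩]) (k' + 1) le_rfl]
  exact (ptilde_succ k' z).symm

lemma log_le_half (u : ℝ) (hu : 0 < u) : Real.log u ≤ u / 2 := by
  have hs : 0 < Real.sqrt u := Real.sqrt_pos.2 hu
  have h1 : Real.log u = 2 * Real.log (Real.sqrt u) := by
    rw [Real.log_sqrt hu.le]; ring
  have h2 : Real.log (Real.sqrt u) ≤ Real.sqrt u - 1 := Real.log_le_sub_one_of_pos hs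
  have h3 : Real.sqrt u ^ 2 = u := Real.sq_sqrt hu.le
  nlinarith [sq_nonneg (Real.sqrt u - 2)]

lemma g_mono (u v : ℝ) (hv : 2 ≤ v) (h : v ≤ u) :
    (u - v) / 2 ≤ (u - Real.log u) - (v - Real.log v) := by
  have hv0 : 0 < v := by linarith
  have hu0 : 0 < u := by linarith
  have h1 : Real.log u - Real.log v = Real.log (u / v) :=
    (Real.log_div (ne_of_gt hu0) (ne_of_gt hv0)).symm
  have h2 : Real.log (u / v) ≤ u / v - 1 := Real.log_le_sub_one_of_pos (by positivity)
  have h3 : u / v - 1 = (u - v) / v := by field_simp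
  have h4 : (u - v) / v ≤ (u - v) / 2 := by
    rw [div_le_div_iff₀ (by linarith) (by norm_num)]
    nlinarith
  linarith

lemma g_lower (u v : ℝ) (hu : 2 ≤ u) (hv : 2 ≤ v) :
    |u - v| ≤ 2 * |(u - Real.log u) - (v - Real.log v)| := by
  rcases le_total v u with h | h
  · have h1 := g_mono u v hv h
    rw [abs_of_nonneg (by linarith), abs_of_nonneg (by linarith)]
    linarith
  · have h1 := g_mono v u hu h
    rw [abs_of_nonpos (by linarith), abs_sub_comm, abs_of_nonneg (by linarith)]
    linarith

/-- For every `n ≥ 0`, the solution `y(x) = −W₋₁(−e^{−x})` of `y − ln y = x` with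
`y > 1` satisfies `y(x) = x + Σ_{k=0}^n p̃_k(ln x)/x^k + O((ln x/x)^{n+1})` as
`x → +∞` (and in particular `y(x) = x + O(ln x)`). -/
theorem stmt_19 (y : ℝ → ℝ)
    (hy : ∀ x : ℝ, 1 < x → 1 < y x ∧ y x - Real.log (y x) = x) :
    ((fun x : ℝ => y x - x) =O[atTop] Real.log) ∧
    ∀ n : ℕ,
      (fun x : ℝ => y x - (x + ∑ k ∈ range (n + 1), ptilde k (Real.log x) / x ^ k))
        =O[atTop] (fun x : ℝ => (Real.log x / x) ^ (n + 1)) := by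
  constructor
  · rw [Asymptotics.isBigO_iff]
    refine ⟨2, ?_⟩
    filter_upwards [eventually_ge_atTop (2:ℝ)] with x hx
    have hx1 : (1:ℝ) < x := by linarith
    obtain ⟨hy1, hye⟩ := hy x hx1
    have hy0 : 0 < y x := by linarith
    have hylog : 0 < Real.log (y x) := Real.log_pos hy1
    have h2 : y x ≤ 2 * x := by
      have := log_le_half (y x) hy0
      linarith
    have hxpos : (0:ℝ) < x := by linarith
    have hlog2 : Real.log (y x) ≤ 2 * Real.log x := by
      calc Real.log (y x) ≤ Real.log (2 * x) := Real.log_le_log hy0 h2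
        _ ≤ Real.log (x * x) := Real.log_le_log (by positivity) (by nlinarith)
        _ = 2 * Real.log x := by
            rw [Real.log_mul (ne_of_gt hxpos) (ne_of_gt hxpos)]; ring
    rw [Real.norm_eq_abs, Real.norm_eq_abs,
      abs_of_nonneg (by linarith : (0:ℝ) ≤ y x - x),
      abs_of_nonneg (Real.log_nonneg (by linarith))]
    linarith
  · intro n
    -- bound function for the coefficients `acoef n z`
    obtain ⟨D, hD0, hDa⟩ : ∃ D : ℕ → ℝ, (∀ i, 0 ≤ D i) ∧
        ∀ z : ℝ, 1 ≤ z → ∀ i, 1 ≤ i → |acoef n z i| ≤ D i * z ^ i := by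
      refine ⟨fun i => if h : 1 ≤ i ∧ i ≤ n + 1 then (ptilde_bound (i - 1)).choose else 0,
        fun i => ?_, fun z hz i hi => ?_⟩
      · dsimp only; split
        · exact (ptilde_bound _).choose_spec.1
        · exact le_refl 0
      · dsimp only
        by_cases h : 1 ≤ i ∧ i ≤ n + 1
        · rw [acoef, if_pos h, dif_pos h]
          refine le_trans ((ptilde_bound (i - 1)).choose_spec.2 z hz) ?_
          exact mul_le_mul_of_nonneg_left (pow_le_pow_right₀ hz (by omega))
            (ptilde_bound (i - 1)).choose_spec.1
        · rw [acoef, if_neg h, dif_neg h, abs_zero]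
          simp
    set N : ℕ := n + 1 with hN
    set M : ℕ := (n + 1) * N + 1 with hM
    set Ka : ℝ := ∑ i ∈ Finset.Icc 1 N, D i with hKa
    have hKa0 : 0 ≤ Ka := Finset.sum_nonneg fun i _ => hD0 i
    set Kc : ℕ → ℝ := fun k => ∑ j ∈ Finset.Icc 1 (n + 1), sP D j k with hKc
    have hKc0 : ∀ k, 0 ≤ Kc k := fun k =>
      Finset.sum_nonneg fun j _ => sP_nonneg D hD0 j k
    set KC : ℝ := ∑ k ∈ Finset.range M, Kc k with hKC
    have hKC0 : 0 ≤ KC := Finset.sum_nonneg fun k _ => hKc0 k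
    rw [Asymptotics.isBigO_iff]
    refine ⟨2 * (KC + 2 * (Ka + 1) ^ (n + 2)), ?_⟩
    have hev1 : ∀ᶠ x : ℝ in atTop, (1:ℝ) ≤ Real.log x :=
      Real.tendsto_log_atTop.eventually_ge_atTop 1
    have hev2 : ∀ᶠ x : ℝ in atTop, ‖Real.log x‖ ≤ (1 / (2 * (Ka + 1))) * ‖x‖ :=
      Real.isLittleO_log_id_atTop.def (by positivity)
    filter_upwards [eventually_ge_atTop (4:ℝ), hev1, hev2] with x hx4 hz1 hlit
    have hx0 : (0:ℝ) < x := by linarith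
    have hx1 : (1:ℝ) < x := by linarith
    set z : ℝ := Real.log x with hzdef
    set X : ℝ := x⁻¹ with hXdef
    have hX0 : 0 ≤ X := by positivity
    have hzx0 : 0 ≤ z / x := by positivity
    have hzx : z / x ≤ 1 / (2 * (Ka + 1)) := by
      rw [div_le_iff₀ hx0]
      calc z ≤ ‖z‖ := by rw [Real.norm_eq_abs]; exact le_abs_self z
        _ ≤ (1 / (2 * (Ka + 1))) * ‖x‖ := hlit
        _ = 1 / (2 * (Ka + 1)) * x := by rw [Real.norm_eq_abs, abs_of_pos hx0]
    have hzx1 : z / x ≤ 1 := by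
      have h1 : (1:ℝ) / (2 * (Ka + 1)) ≤ 1 := by
        rw [div_le_one (by positivity)]; linarith
      linarith
    -- the remainder variable t
    set a : ℕ → ℝ := acoef n z with hadef
    have ha0 : a 0 = 0 := by rw [hadef, acoef, if_neg (by omega)]
    have haN : ∀ i, N < i → a i = 0 := fun i hi => by
      rw [hadef, acoef, if_neg (by omega)]
    set t : ℝ := ∑ i ∈ Finset.range (N + 1), a i * X ^ i with htdef
    have hdiv : ∀ k : ℕ, ptilde k z / x ^ k = ptilde k z * X ^ k := fun k => by
      rw [div_eq_mul_inv, hXdef, inv_pow]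
    -- bound on t
    have ht : |t| ≤ Ka * (z / x) := by
      calc |t| ≤ ∑ i ∈ Finset.range (N + 1), |a i * X ^ i| :=
            Finset.abs_sum_le_sum_abs _ _
        _ ≤ ∑ i ∈ Finset.range (N + 1), (if i = 0 then 0 else D i * (z / x)) := by
            refine Finset.sum_le_sum fun i _ => ?_
            rcases Nat.eq_zero_or_pos i with rfl | hi
            · simp [ha0]
            · rw [if_neg (by omega), abs_mul, abs_pow, abs_of_nonneg hX0]
              calc |a i| * X ^ i ≤ (D i * z ^ i) * X ^ i := by
                    apply mul_le_mul_of_nonneg_right (hDa z hz1 i hi)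
                    exact pow_nonneg hX0 i
                _ = D i * (z / x) ^ i := by
                    rw [div_pow, div_eq_mul_inv, hXdef, inv_pow]; ring
                _ ≤ D i * (z / x) ^ 1 := by
                    apply mul_le_mul_of_nonneg_left _ (hD0 i)
                    exact pow_le_pow_of_le_one hzx0 hzx1 hi
                _ = D i * (z / x) := by rw [pow_one]
        _ = Ka * (z / x) := by
            rw [Finset.sum_range_succ', hKa, sum_Icc_one_eq_sum_range, Finset.sum_mul]
            simp
    have ht2 : |t| ≤ 1 / 2 := by
      calc |t| ≤ Ka * (z / x) := ht
        _ ≤ Ka * (1 / (2 * (Ka + 1))) := mul_le_mul_of_nonneg_left hzx hKa0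
        _ ≤ 1 / 2 := by
            rw [mul_one_div, div_le_div_iff₀ (by positivity) (by norm_num)]
            linarith
    have h1t : 0 < 1 + t := by
      have := abs_le.1 ht2
      linarith [this.1]
    -- F x = x * (1 + t)
    set F : ℝ := x + ∑ k ∈ Finset.range (n + 1), ptilde k z / x ^ k with hFdef
    have hFeq : F = x * (1 + t) := by
      have hxt : x * t = ∑ k ∈ Finset.range (n + 1), ptilde k z / x ^ k := by
        rw [htdef, Finset.mul_sum, hN, Finset.sum_range_succ', ha0]
        simp only [mul_zero, zero_mul, add_zero, pow_zero]
        refine Finset.sum_congr rfl fun i hi => ?_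
        rw [Finset.mem_range] at hi
        have hai : a (i + 1) = ptilde i z := by
          rw [hadef, acoef, if_pos ⟨by omega, by omega⟩]
          norm_num
        rw [hai, hdiv i, pow_succ, hXdef]
        field_simp
      rw [hFdef, mul_add, mul_one, hxt]
    have hF2 : 2 ≤ F := by
      rw [hFeq]; nlinarith [abs_le.1 ht2]
    have hlogF : Real.log F = z + Real.log (1 + t) := by
      rw [hFeq, Real.log_mul (ne_of_gt hx0) (ne_of_gt h1t), hzdef]
    -- the series S and its polynomial form
    set S : ℝ := ∑ j ∈ Finset.Icc 1 (n + 1), ((-1:ℝ) ^ (j + 1) / j) * t ^ j with hSdef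
    set c : ℕ → ℝ :=
      fun k => ∑ j ∈ Finset.Icc 1 (n + 1), ((-1:ℝ) ^ (j + 1) / j) * sP a j k with hcdef
    have hSX : S = ∑ k ∈ Finset.range M, c k * X ^ k := by
      rw [hSdef, htdef]
      exact series_expand a N (n + 1) ha0 haN X M (by omega)
    -- error of the log series
    have habs : |(-t)| < 1 := by rw [abs_neg]; linarith [ht2]
    have hE0 := Real.abs_log_sub_add_sum_range_le habs (n + 1)
    rw [sub_neg_eq_add, abs_neg] at hE0
    have hsumS : ∑ i ∈ Finset.range (n + 1), (-t) ^ (i + 1) / ((i : ℝ) + 1) = -S := by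
      calc ∑ i ∈ Finset.range (n + 1), (-t) ^ (i + 1) / ((i : ℝ) + 1)
          = ∑ i ∈ Finset.range (n + 1),
              -(((-1 : ℝ) ^ ((i + 1) + 1) / ((i + 1 : ℕ) : ℝ)) * t ^ (i + 1)) := by
            refine Finset.sum_congr rfl fun i _ => ?_
            rw [neg_pow]
            push_cast
            ring
        _ = -∑ i ∈ Finset.range (n + 1),
              ((-1 : ℝ) ^ ((i + 1) + 1) / ((i + 1 : ℕ) : ℝ)) * t ^ (i + 1) := by
            rw [Finset.sum_neg_distrib]
        _ = -S := by rw [hSdef, sum_Icc_one_eq_sum_range]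
    rw [hsumS, neg_add_eq_sub] at hE0
    -- hE0 : |Real.log (1 + t) - S| ≤ |t| ^ (n + 2) / (1 - |t|)
    have hE : |Real.log (1 + t) - S| ≤ 2 * |t| ^ (n + 2) := by
      refine le_trans hE0 ?_
      rw [div_le_iff₀ (by linarith [ht2])]
      have hp : 0 ≤ |t| ^ (n + 2) := pow_nonneg (abs_nonneg t) _
      nlinarith [mul_le_mul_of_nonneg_left ht2 hp]
    -- identify coefficients
    have hck : ∀ k, 1 ≤ k → k ≤ n + 1 → c k = ptilde k z := fun k h1 h2 =>
      ck_eq n z k h1 h2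
    have hc0 : c 0 = 0 := by
      rw [hcdef]
      refine Finset.sum_eq_zero fun j hj => ?_
      rw [Finset.mem_Icc] at hj
      rw [sP_zero_of_lt a j 0 hj.1, mul_zero]
    have hcb : ∀ k, |c k| ≤ Kc k * z ^ k := by
      intro k
      rw [hcdef, hKc]
      refine le_trans (Finset.abs_sum_le_sum_abs _ _) ?_
      rw [Finset.sum_mul]
      refine Finset.sum_le_sum fun j hj => ?_
      rw [Finset.mem_Icc] at hj
      rw [abs_mul]
      have h1 : |(-1 : ℝ) ^ (j + 1) / j| ≤ 1 := by
        rw [abs_div, abs_pow, abs_neg, abs_one, one_pow,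
          abs_of_nonneg (by positivity : (0:ℝ) ≤ (j:ℝ)),
          div_le_one (by exact_mod_cast hj.1)]
        exact_mod_cast hj.1
      calc |(-1 : ℝ) ^ (j + 1) / j| * |sP a j k|
          ≤ 1 * (sP D j k * z ^ k) :=
            mul_le_mul h1 (sP_bound a D z hz1 hD0 (hDa z hz1) j k) (abs_nonneg _) zero_le_one
        _ = sP D j k * z ^ k := one_mul _
    -- the main estimate on F - log F - x
    have hGF : F - Real.log F - x = (∑ k ∈ Finset.Icc 1 n, ptilde k z * X ^ k)
        - Real.log (1 + t) := by
      rw [hlogF, hFdef]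
      have h1 : ∑ k ∈ Finset.range (n + 1), ptilde k z / x ^ k
          = (∑ k ∈ Finset.Icc 1 n, ptilde k z * X ^ k) + z := by
        rw [Finset.sum_range_succ', sum_Icc_one_eq_sum_range]
        congr 1
        · exact Finset.sum_congr rfl fun i _ => hdiv (i + 1)
        · rw [hdiv 0, pow_zero, mul_one, ptilde]
      rw [h1]; ring
    set d : ℕ → ℝ := fun k => if 1 ≤ k ∧ k ≤ n then c k else 0 with hddef
    have hdX : ∑ k ∈ Finset.Icc 1 n, ptilde k z * X ^ k
        = ∑ k ∈ Finset.range M, d k * X ^ k := by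
      rw [← Finset.sum_subset (show Finset.Icc 1 n ⊆ Finset.range M by
        intro k hk; rw [Finset.mem_Icc] at hk; rw [Finset.mem_range]
        have : N ≤ (n+1) * N := Nat.le_mul_of_pos_left N (by omega)
        omega)]
      · refine Finset.sum_congr rfl fun k hk => ?_
        rw [Finset.mem_Icc] at hk
        rw [hddef]
        dsimp only
        rw [if_pos ⟨hk.1, hk.2⟩, hck k hk.1 (by omega)]
      · intro k _ hk
        rw [hddef]
        dsimp only
        rw [if_neg (by rw [Finset.mem_Icc] at hk; exact hk), zero_mul]
    have hmain : |F - Real.log F - x| ≤ (KC + 2 * (Ka + 1) ^ (n + 2)) * (z / x) ^ (n + 1) := by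
      rw [hGF, hdX]
      have hsplit : (∑ k ∈ Finset.range M, d k * X ^ k) - Real.log (1 + t)
          = (∑ k ∈ Finset.range M, (d k - c k) * X ^ k) + (S - Real.log (1 + t)) := by
        rw [hSX]
        have h7 : ∑ k ∈ Finset.range M, (d k - c k) * X ^ k
            = ∑ k ∈ Finset.range M, d k * X ^ k - ∑ k ∈ Finset.range M, c k * X ^ k := by
          rw [← Finset.sum_sub_distrib]
          exact Finset.sum_congr rfl fun k _ => by ring
        rw [h7]; ring
      rw [hsplit]
      have hzxp : 0 ≤ (z / x) ^ (n + 1) := pow_nonneg hzx0 _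
      have hpart1 : |∑ k ∈ Finset.range M, (d k - c k) * X ^ k|
          ≤ KC * (z / x) ^ (n + 1) := by
        refine le_trans (Finset.abs_sum_le_sum_abs _ _) ?_
        rw [hKC, Finset.sum_mul]
        refine Finset.sum_le_sum fun k hk => ?_
        rw [abs_mul, abs_pow, abs_of_nonneg hX0]
        rcases le_or_gt k n with h | h
        · have hdc : d k - c k = 0 := by
            rcases Nat.eq_zero_or_pos k with rfl | hk1
            · rw [hddef]; dsimp only; rw [if_neg (by omega), hc0]; ring
            · rw [hddef]; dsimp only; rw [if_pos ⟨hk1, h⟩]; ring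
          rw [hdc, abs_zero, zero_mul]
          exact mul_nonneg (hKc0 k) hzxp
        · have hdk : d k = 0 := by rw [hddef]; dsimp only; rw [if_neg (by omega)]
          rw [hdk, zero_sub, abs_neg]
          calc |c k| * X ^ k ≤ (Kc k * z ^ k) * X ^ k := by
                apply mul_le_mul_of_nonneg_right (hcb k) (pow_nonneg hX0 k)
            _ = Kc k * (z / x) ^ k := by
                rw [div_pow, div_eq_mul_inv, hXdef, inv_pow]; ring
            _ ≤ Kc k * (z / x) ^ (n + 1) := by
                apply mul_le_mul_of_nonneg_left _ (hKc0 k)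
                exact pow_le_pow_of_le_one hzx0 hzx1 (by omega)
      have hpart2 : |S - Real.log (1 + t)| ≤ 2 * (Ka + 1) ^ (n + 2) * (z / x) ^ (n + 1) := by
        rw [abs_sub_comm]
        refine le_trans hE ?_
        have h1 : |t| ^ (n + 2) ≤ (Ka * (z / x)) ^ (n + 2) :=
          pow_le_pow_left₀ (abs_nonneg t) ht _
        have h2 : (Ka * (z / x)) ^ (n + 2) = Ka ^ (n + 2) * ((z / x) ^ (n + 2)) := by
          rw [mul_pow]
        have h3 : (z / x) ^ (n + 2) ≤ (z / x) ^ (n + 1) :=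
          pow_le_pow_of_le_one hzx0 hzx1 (by omega)
        have h4 : Ka ^ (n + 2) ≤ (Ka + 1) ^ (n + 2) :=
          pow_le_pow_left₀ hKa0 (by linarith) _
        have h5 : 0 ≤ Ka ^ (n + 2) := pow_nonneg hKa0 _
        have h6 : 0 ≤ (Ka + 1) ^ (n + 2) := by positivity
        calc 2 * |t| ^ (n + 2) ≤ 2 * (Ka ^ (n + 2) * ((z / x) ^ (n + 2))) := by
              rw [← h2]; linarith
          _ ≤ 2 * ((Ka + 1) ^ (n + 2) * ((z / x) ^ (n + 1))) := by
              have := mul_le_mul h4 h3 (pow_nonneg hzx0 _) h6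
              linarith [mul_le_mul_of_nonneg_left h3 h5]
          _ = 2 * (Ka + 1) ^ (n + 2) * (z / x) ^ (n + 1) := by ring
      calc |(∑ k ∈ Finset.range M, (d k - c k) * X ^ k) + (S - Real.log (1 + t))|
          ≤ |∑ k ∈ Finset.range M, (d k - c k) * X ^ k| + |S - Real.log (1 + t)| :=
            abs_add_le _ _
        _ ≤ KC * (z / x) ^ (n + 1) + 2 * (Ka + 1) ^ (n + 2) * (z / x) ^ (n + 1) := by
            linarith
        _ = (KC + 2 * (Ka + 1) ^ (n + 2)) * (z / x) ^ (n + 1) := by ring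
    -- put it together with the defining equation of y
    obtain ⟨hy1, hye⟩ := hy x hx1
    have hy2 : 2 ≤ y x := by
      have hlogy : 0 ≤ Real.log (y x) := Real.log_nonneg (by linarith)
      linarith
    have hfin := g_lower F (y x) hF2 hy2
    have h8 : F - Real.log F - (y x - Real.log (y x)) = F - Real.log F - x := by rw [hye]
    rw [h8] at hfin
    rw [Real.norm_eq_abs, Real.norm_eq_abs]
    calc |y x - F| = |F - y x| := abs_sub_comm _ _
      _ ≤ 2 * |F - Real.log F - x| := hfin
      _ ≤ 2 * ((KC + 2 * (Ka + 1) ^ (n + 2)) * (z / x) ^ (n + 1)) := by linarith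
      _ = 2 * (KC + 2 * (Ka + 1) ^ (n + 2)) * |(z / x) ^ (n + 1)| := by
          rw [abs_of_nonneg (pow_nonneg hzx0 (n + 1))]; ring
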